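/- Let n ≥ 1 be an integer and let α be a real number with −π/2 < α < π/2. If p ∈ 𝓗[1,n] satisfies p(z) ≠ 0 for all z ∈ 𝕌, p ≢ 1, and |p(z) + z p'(z)/p(z) − 1| < (n/2 + 1)·|p(z)|·cos α for all z ∈ 𝕌, then |arg(p(z))| < π/2 − |α| for all z ∈ 𝕌. -/

import Mathlib

open Metric

/-- Max modulus: if `‖z^m * g z‖ ≤ C` on the unit ball and `g` is differentiable there,
then `‖g‖ ≤ C` on the unit ball. -/
lemma aux_maxmod (m : ℕ) (C : ℝ) (g : ℂ → ℂ)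
    (hg : DifferentiableOn ℂ g (ball (0:ℂ) 1))
    (hC : ∀ z ∈ ball (0:ℂ) 1, ‖z ^ m * g z‖ ≤ C) :
    ∀ z ∈ ball (0:ℂ) 1, ‖g z‖ ≤ C := by
  intro z₀ hz₀
  have hz₀' : ‖z₀‖ < 1 := mem_ball_zero_iff.1 hz₀
  have key : ∀ r : ℝ, ‖z₀‖ < r → r < 1 → ‖g z₀‖ * r ^ m ≤ C := by
    intro r h1 h2
    have hr0 : 0 < r := lt_of_le_of_lt (norm_nonneg _) h1
    have hsub : closedBall (0:ℂ) r ⊆ ball 0 1 := closedBall_subset_ball h2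
    have hd : DiffContOnCl ℂ g (ball (0:ℂ) r) := by
      apply DifferentiableOn.diffContOnCl
      rw [closure_ball (0:ℂ) hr0.ne']
      exact hg.mono hsub
    have hfront : ∀ z ∈ frontier (ball (0:ℂ) r), ‖g z‖ ≤ C / r ^ m := by
      intro z hzf
      rw [frontier_ball (0:ℂ) hr0.ne'] at hzf
      have hnz : ‖z‖ = r := by simpa using hzf
      have hzball : z ∈ ball (0:ℂ) 1 := mem_ball_zero_iff.2 (hnz ▸ h2)
      have h3 := hC z hzball
      rw [norm_mul, norm_pow, hnz] at h3
      rw [le_div_iff₀ (pow_pos hr0 m)]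
      linarith
    have hmem : z₀ ∈ closure (ball (0:ℂ) r) :=
      subset_closure (mem_ball_zero_iff.2 h1)
    have h4 := Complex.norm_le_of_forall_mem_frontier_norm_le isBounded_ball hd hfront hmem
    rw [le_div_iff₀ (pow_pos hr0 m)] at h4
    exact h4
  have hlim : Filter.Tendsto (fun r : ℝ => ‖g z₀‖ * r ^ m) (nhdsWithin 1 (Set.Iio 1))
      (nhds (‖g z₀‖)) := by
    have h5 : Filter.Tendsto (fun r : ℝ => ‖g z₀‖ * r ^ m) (nhds 1) (nhds (‖g z₀‖ * 1 ^ m)) :=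
      (continuous_const.mul (continuous_pow m)).tendsto 1
    simpa using h5.mono_left nhdsWithin_le_nhds
  refine le_of_tendsto hlim ?_
  filter_upwards [Ioo_mem_nhdsLT_of_mem (⟨hz₀', le_refl 1⟩ : (1:ℝ) ∈ Set.Ioc ‖z₀‖ 1)]
    with r hr
  exact key r hr.1 hr.2

/-- Factorization of an analytic function with vanishing derivatives at `0`. -/
lemma aux_factor (q : ℂ → ℂ) (hq : DifferentiableOn ℂ q (ball (0:ℂ) 1)) (n : ℕ)
    (h0 : ∀ k < n, iteratedDeriv k q 0 = 0) :
    ∃ r : ℂ → ℂ, DifferentiableOn ℂ r (ball (0:ℂ) 1) ∧ ∀ z, q z = z ^ n * r z := by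
  obtain ⟨ps, hps⟩ : AnalyticAt ℂ q 0 := hq.analyticAt (ball_mem_nhds _ one_pos)
  have hcoeff : ∀ k < n, ps.coeff k = 0 := by
    intro k hk
    obtain ⟨R, hball⟩ := hps
    have h1 : (Nat.factorial k) • (ps k fun _ => (1:ℂ)) = iteratedFDeriv ℂ k q 0 fun _ => 1 :=
      hball.factorial_smul (1:ℂ) k
    have h2 : iteratedFDeriv ℂ k q 0 (fun _ => (1:ℂ)) = iteratedDeriv k q 0 :=
      (iteratedDeriv_eq_iteratedFDeriv).symm
    rw [h2, h0 k hk] at h1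
    have h3 : ((Nat.factorial k) : ℂ) * (ps k fun _ => (1:ℂ)) = 0 := by
      rw [← nsmul_eq_mul]; exact h1
    rcases mul_eq_zero.1 h3 with h4 | h4
    · exact absurd h4 (by exact_mod_cast Nat.factorial_ne_zero k)
    · exact h4
  have hdiff : ∀ k, DifferentiableOn ℂ ((Function.swap dslope (0:ℂ))^[k] q) (ball (0:ℂ) 1) := by
    intro k
    induction k with
    | zero => exact hq
    | succ k ih =>
      rw [Function.iterate_succ_apply']
      exact (Complex.differentiableOn_dslope (ball_mem_nhds _ one_pos)).mpr ih
  have hval : ∀ k, ((Function.swap dslope (0:ℂ))^[k] q) 0 = ps.coeff k := by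
    intro k
    have h2 := hps.has_fpower_series_iterate_dslope_fslope k
    have h3 : (FormalMultilinearSeries.fslope^[k] ps).coeff 0
        = ((Function.swap dslope (0:ℂ))^[k] q) 0 := h2.coeff_zero 1
    rw [← h3, FormalMultilinearSeries.coeff_iterate_fslope, zero_add]
  have hq0 : n ≠ 0 → q 0 = 0 := by
    intro hn
    have := h0 0 (Nat.pos_of_ne_zero hn)
    simpa using this
  have heq : ∀ k, k ≤ n → ∀ z, q z = z ^ k * ((Function.swap dslope (0:ℂ))^[k] q) z := by
    intro k
    induction k with
    | zero => intro _ z; simp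
    | succ k ih =>
      intro hk z
      have hk' : k < n := hk
      rcases eq_or_ne z 0 with rfl | hz
      · rw [hq0 (by omega)]
        simp
      · rw [Function.iterate_succ_apply', ih (le_of_lt hk') z]
        have hv : ((Function.swap dslope (0:ℂ))^[k] q) 0 = 0 := by
          rw [hval k]; exact hcoeff k hk'
        have hds : Function.swap dslope 0 ((Function.swap dslope (0:ℂ))^[k] q) z
            = z⁻¹ * ((Function.swap dslope (0:ℂ))^[k] q) z := by
          show dslope _ 0 z = _
          rw [dslope_of_ne _ hz, slope_def_field, hv]
          field_simp
          ring
        rw [hds]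
        field_simp
        ring
  exact ⟨(Function.swap dslope (0:ℂ))^[n] q, hdiff n, heq n le_rfl⟩

/-- Geometry: if `|w - 1| < cos α` then `|arg w| < π/2 - |α|`. -/
lemma aux_arg {w : ℂ} {α : ℝ} (hα : |α| < Real.pi / 2)
    (hw : ‖w - 1‖ < Real.cos α) : |w.arg| < Real.pi / 2 - |α| := by
  have hc : 0 < Real.cos α := Real.cos_pos_of_mem_Ioo ⟨(abs_lt.1 hα).1, (abs_lt.1 hα).2⟩
  have hc1 : Real.cos α ≤ 1 := Real.cos_le_one α
  have hsq : (w.re - 1)^2 + w.im^2 < Real.cos α ^ 2 := by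
    have h2 : ‖w-1‖ ^ 2 < Real.cos α ^ 2 :=
      pow_lt_pow_left₀ hw (norm_nonneg _) two_ne_zero
    have h3 : ‖w-1‖ ^ 2 = (w.re-1)^2 + w.im^2 := by
      rw [Complex.sq_norm, Complex.normSq_apply]
      simp [Complex.sub_re, Complex.sub_im]
      ring
    linarith [h3 ▸ h2]
  have hx : 0 < w.re := by nlinarith [sq_nonneg w.im]
  have hwne : w ≠ 0 := fun h => by simp [h] at hx
  have habs : 0 < ‖w‖ := norm_pos_iff.mpr hwne
  have habs2 : ‖w‖ ^ 2 = w.re^2 + w.im^2 := by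
    rw [Complex.sq_norm, Complex.normSq_apply]; ring
  have hkey : |w.im| < ‖w‖ * Real.cos α := by
    have h4 : |w.im| ^ 2 < (‖w‖ * Real.cos α) ^ 2 := by
      rw [sq_abs, mul_pow, habs2]
      by_cases hc2 : Real.cos α ^ 2 = 1
      · rw [hc2]; nlinarith [mul_pos hx hx]
      · have hc2' : Real.cos α ^ 2 < 1 := lt_of_le_of_ne (by nlinarith) hc2
        nlinarith [sq_nonneg (w.re - (1 - Real.cos α ^ 2))]
    exact lt_of_pow_lt_pow_left₀ 2 (by positivity) h4
  have harg : w.arg = Real.arcsin (w.im / ‖w‖) := Complex.arg_of_re_nonneg hx.le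
  have hmem : Real.pi / 2 - |α| ∈ Set.Ioc (-(Real.pi / 2)) (Real.pi / 2) := by
    constructor
    · have := Real.pi_pos
      nlinarith [abs_nonneg α]
    · linarith [abs_nonneg α]
  have hsin : Real.sin (Real.pi / 2 - |α|) = Real.cos α := by
    rw [Real.sin_pi_div_two_sub, Real.cos_abs]
  rw [harg, abs_lt]
  constructor
  · rw [neg_lt, ← Real.arcsin_neg, Real.arcsin_lt_iff_lt_sin' hmem, hsin]
    have e2 : -(w.im / ‖w‖) = (-w.im) / ‖w‖ := by ring
    rw [e2, div_lt_iff₀ habs]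
    calc -w.im ≤ |w.im| := neg_le_abs _
    _ < ‖w‖ * Real.cos α := hkey
    _ = Real.cos α * ‖w‖ := mul_comm _ _
  · rw [Real.arcsin_lt_iff_lt_sin' hmem, hsin, div_lt_iff₀ habs]
    calc w.im ≤ |w.im| := le_abs_self _
    _ < ‖w‖ * Real.cos α := hkey
    _ = Real.cos α * ‖w‖ := mul_comm _ _

/-- **Theorem 3.**  If `p ∈ 𝓗[1,n]` is nonvanishing, `p ≢ 1`, and
`|p(z) + z p'(z)/p(z) - 1| < (n/2 + 1)|p(z)| cos α` on `𝕌` for some `-π/2 < α < π/2`,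
then `|arg p(z)| < π/2 - |α|` on `𝕌`. -/
theorem strongly_caratheodory_of_modulus_bound
    (n : ℕ) (hn : 1 ≤ n) (α : ℝ) (hα₁ : -(Real.pi / 2) < α) (hα₂ : α < Real.pi / 2)
    (p : ℂ → ℂ)
    (hp : DifferentiableOn ℂ p (ball (0 : ℂ) 1))
    (hp0 : p 0 = 1)
    (hpcoef : ∀ k : ℕ, 1 ≤ k → k < n → iteratedDeriv k p 0 = 0)
    (hpne0 : ∀ z ∈ ball (0 : ℂ) 1, p z ≠ 0)
    (hpne1 : ¬ ∀ z ∈ ball (0 : ℂ) 1, p z = 1)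
    (habs : ∀ z ∈ ball (0 : ℂ) 1,
      ‖p z + z * deriv p z / p z - 1‖ <
        ((n : ℝ) / 2 + 1) * ‖p z‖ * Real.cos α) :
    ∀ z ∈ ball (0 : ℂ) 1, |(p z).arg| < Real.pi / 2 - |α| := by
  have hopen : IsOpen (ball (0:ℂ) 1) := isOpen_ball
  have hαabs : |α| < Real.pi / 2 := abs_lt.2 ⟨hα₁, hα₂⟩
  have hcos : 0 < Real.cos α := Real.cos_pos_of_mem_Ioo ⟨hα₁, hα₂⟩
  set M : ℝ := ((n : ℝ) / 2 + 1) * Real.cos α with hM_def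
  have hM : 0 < M := by positivity
  -- step 1: factor `p - 1 = z^n * r`
  set q : ℂ → ℂ := fun w => p w - 1 with hq_def
  have hqdiff : DifferentiableOn ℂ q (ball 0 1) := hp.sub (differentiableOn_const 1)
  have hqcoef : ∀ k < n, iteratedDeriv k q 0 = 0 := by
    intro k hk
    rcases Nat.eq_zero_or_pos k with rfl | hk1
    · simp [hq_def, iteratedDeriv_zero, hp0]
    · obtain ⟨m, rfl⟩ : ∃ m, k = m + 1 := ⟨k - 1, by omega⟩
      have hdq : deriv q = deriv p := by
        funext w
        simp only [hq_def]
        rw [deriv_sub_const]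
      rw [iteratedDeriv_succ', hdq, ← iteratedDeriv_succ']
      exact hpcoef (m+1) (by omega) hk
  obtain ⟨r, hrdiff, hrfac⟩ := aux_factor q hqdiff n hqcoef
  -- g with 1/p - 1 = z^n * g
  set g : ℂ → ℂ := fun w => -r w / p w with hg_def
  have hgdiff : DifferentiableOn ℂ g (ball 0 1) := hrdiff.neg.div hp hpne0
  have hfac : ∀ w ∈ ball (0:ℂ) 1, 1 / p w - 1 = w ^ n * g w := by
    intro w hw
    have hpw := hpne0 w hw
    have h1 : p w - 1 = w ^ n * r w := hrfac w
    rw [hg_def]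
    field_simp
    linear_combination -h1
  -- h := z/p - z
  set h : ℂ → ℂ := fun w => w / p w - w with hh_def
  have hhdiff : DifferentiableOn ℂ h (ball 0 1) :=
    (differentiableOn_id.div hp hpne0).sub differentiableOn_id
  have hHd : ∀ w ∈ ball (0:ℂ) 1,
      HasDerivAt h ((1 * p w - w * deriv p w) / p w ^ 2 - 1) w := by
    intro w hw
    have hdp : HasDerivAt p (deriv p w) w :=
      (hp.differentiableAt (hopen.mem_nhds hw)).hasDerivAt
    exact ((hasDerivAt_id w).div hdp (hpne0 w hw)).sub (hasDerivAt_id w)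
  have hbound : ∀ w ∈ ball (0:ℂ) 1, ‖deriv h w‖ ≤ M := by
    intro w hw
    have hpw := hpne0 w hw
    have hd := (hHd w hw).deriv
    have e1 : deriv h w = -((p w + w * deriv p w / p w - 1) / p w) := by
      rw [hd]
      field_simp
      ring
    rw [e1, norm_neg, norm_div]
    rw [div_le_iff₀ (norm_pos_iff.mpr hpw)]
    have h2 := (habs w hw).le
    calc ‖p w + w * deriv p w / p w - 1‖
        = ‖p w + w * deriv p w / p w - 1‖ := rfl
      _ ≤ ((n : ℝ) / 2 + 1) * ‖p w‖ * Real.cos α := h2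
      _ = M * ‖p w‖ := by rw [hM_def]; ring
  -- Schwarz: deriv h = z^n * G₂ with ‖G₂‖ ≤ M
  have hganal : AnalyticOnNhd ℂ g (ball (0:ℂ) 1) := hgdiff.analyticOnNhd hopen
  set G₂ : ℂ → ℂ := fun w => ((n:ℂ) + 1) * g w + w * deriv g w with hG₂_def
  have hG₂diff : DifferentiableOn ℂ G₂ (ball (0:ℂ) 1) := by
    apply DifferentiableOn.add
    · exact (differentiableOn_const _).mul hgdiff
    · exact differentiableOn_id.mul hganal.deriv.differentiableOn
  have hderiv_fac : ∀ w ∈ ball (0:ℂ) 1, deriv h w = w ^ n * G₂ w := by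
    intro w hw
    have heqset : Set.EqOn h (fun u => u ^ (n+1) * g u) (ball (0:ℂ) 1) := by
      intro u hu
      have := hfac u hu
      have hpu := hpne0 u hu
      simp only [hh_def]
      calc u / p u - u = u * (1 / p u - 1) := by field_simp
        _ = u * (u ^ n * g u) := by rw [this]
        _ = u ^ (n+1) * g u := by ring
    have hev : h =ᶠ[nhds w] (fun u => u ^ (n+1) * g u) :=
      Filter.eventuallyEq_of_mem (hopen.mem_nhds hw) heqset
    rw [hev.deriv_eq]
    have hgw : HasDerivAt g (deriv g w) w :=
      (hgdiff.differentiableAt (hopen.mem_nhds hw)).hasDerivAt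
    have hpw : HasDerivAt (fun u : ℂ => u ^ (n+1)) (((n:ℂ)+1) * w ^ n) w := by
      simpa using hasDerivAt_pow (n+1) w
    have := (hpw.mul hgw).deriv
    rw [show (fun u => u ^ (n+1) * g u) = (fun u : ℂ => u ^ (n+1)) * g from rfl, this]
    simp only [hG₂_def]
    ring
  have hSchwarz : ∀ w ∈ ball (0:ℂ) 1, ‖G₂ w‖ ≤ M := by
    apply aux_maxmod n M G₂ hG₂diff
    intro w hw
    rw [← hderiv_fac w hw]
    exact hbound w hw
  have hSch : ∀ w ∈ ball (0:ℂ) 1, ‖deriv h w‖ ≤ M * ‖w‖ ^ n := by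
    intro w hw
    rw [hderiv_fac w hw, norm_mul, norm_pow, mul_comm]
    exact mul_le_mul_of_nonneg_right (hSchwarz w hw) (pow_nonneg (norm_nonneg w) n)
  -- integrate
  have hderivh_cont : ContinuousOn (deriv h) (ball (0:ℂ) 1) :=
    (hhdiff.analyticOnNhd hopen).deriv.continuousOn
  have hInt : ∀ w ∈ ball (0:ℂ) 1, ‖h w‖ ≤ M * ‖w‖ ^ (n+1) / (n+1) := by
    intro w hw
    have hwn : ‖w‖ < 1 := mem_ball_zero_iff.1 hw
    have hmem : ∀ t : ℝ, t ∈ Set.uIcc (0:ℝ) 1 → (t:ℂ) * w ∈ ball (0:ℂ) 1 := by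
      intro t ht
      rw [Set.uIcc_of_le zero_le_one] at ht
      rw [mem_ball_zero_iff, norm_mul, Complex.norm_real, Real.norm_eq_abs,
        abs_of_nonneg ht.1]
      calc t * ‖w‖ ≤ 1 * ‖w‖ := mul_le_mul_of_nonneg_right ht.2 (norm_nonneg w)
        _ = ‖w‖ := one_mul _
        _ < 1 := hwn
    have hder : ∀ t ∈ Set.uIcc (0:ℝ) 1,
        HasDerivAt (fun s : ℝ => h ((s:ℂ) * w)) (deriv h ((t:ℂ) * w) * w) t := by
      intro t ht
      have h1 : HasDerivAt (fun u : ℂ => u * w) w (t:ℂ) := by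
        simpa using (hasDerivAt_id (t:ℂ)).mul_const w
      have h2 : HasDerivAt (fun s : ℝ => (s:ℂ) * w) w t := h1.comp_ofReal
      have h3 : HasDerivAt h (deriv h ((t:ℂ) * w)) ((t:ℂ) * w) :=
        (hhdiff.differentiableAt (hopen.mem_nhds (hmem t ht))).hasDerivAt
      exact h3.comp t h2
    have hcont : ContinuousOn (fun t : ℝ => deriv h ((t:ℂ) * w) * w) (Set.uIcc 0 1) := by
      apply ContinuousOn.mul _ continuousOn_const
      exact hderivh_cont.comp ((Complex.continuous_ofReal.mul continuous_const).continuousOn)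
        hmem
    have heq := intervalIntegral.integral_eq_sub_of_hasDerivAt hder
      (hcont.intervalIntegrable)
    have h00 : h 0 = 0 := by simp [hh_def]
    have h11 : h ((1:ℝ) * w : ℂ) = h w := by norm_num
    have hbnd : ‖∫ t in (0:ℝ)..1, deriv h ((t:ℂ) * w) * w‖
        ≤ |∫ t in (0:ℝ)..1, M * ‖w‖ ^ (n+1) * t ^ n| := by
      apply intervalIntegral.norm_integral_le_abs_of_norm_le
      · filter_upwards [MeasureTheory.self_mem_ae_restrict measurableSet_uIoc] with t ht
        rw [Set.uIoc_of_le zero_le_one] at ht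
        have htIcc : t ∈ Set.uIcc (0:ℝ) 1 := by
          rw [Set.uIcc_of_le zero_le_one]; exact ⟨ht.1.le, ht.2⟩
        have h5 := hSch _ (hmem t htIcc)
        rw [norm_mul]
        calc ‖deriv h ((t:ℂ) * w)‖ * ‖w‖ ≤ (M * ‖(t:ℂ) * w‖ ^ n) * ‖w‖ :=
              mul_le_mul_of_nonneg_right h5 (norm_nonneg w)
          _ = M * ‖w‖ ^ (n+1) * t ^ n := by
              rw [norm_mul, Complex.norm_real, Real.norm_eq_abs, abs_of_nonneg ht.1.le]
              ring
      · apply ContinuousOn.intervalIntegrable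
        exact (continuousOn_const.mul ((continuousOn_pow n).mono (Set.subset_univ _)))
    have hval : ∫ t in (0:ℝ)..1, M * ‖w‖ ^ (n+1) * t ^ n = M * ‖w‖ ^ (n+1) / (n+1) := by
      rw [intervalIntegral.integral_const_mul, integral_pow]
      norm_num
      ring
    calc ‖h w‖ = ‖h ((1:ℝ) * w : ℂ) - h 0‖ := by rw [h11, h00, sub_zero]
      _ = ‖∫ t in (0:ℝ)..1, deriv h ((t:ℂ) * w) * w‖ := by
          rw [heq]; norm_num
      _ ≤ |∫ t in (0:ℝ)..1, M * ‖w‖ ^ (n+1) * t ^ n| := hbnd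
      _ = M * ‖w‖ ^ (n+1) / (n+1) := by
          rw [hval, abs_of_nonneg (by positivity)]
  -- conclude |1/p - 1| < cos α
  have hfinal : ∀ w ∈ ball (0:ℂ) 1, ‖1 / p w - 1‖ < Real.cos α := by
    intro w hw
    rcases eq_or_ne w 0 with rfl | hw0
    · simpa [hp0] using hcos
    · have hwn : ‖w‖ < 1 := mem_ball_zero_iff.1 hw
      have hwpos : (0:ℝ) < ‖w‖ := norm_pos_iff.2 hw0
      have h1 : 1 / p w - 1 = h w / w := by
        have hpw := hpne0 w hw
        simp only [hh_def]
        field_simp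
      rw [h1]
      have h2 := hInt w hw
      have h3 : ‖w‖ ^ n < 1 := pow_lt_one₀ (norm_nonneg w) hwn (by omega)
      have h4 : M * ‖w‖ ^ (n+1) / (n+1) < Real.cos α * ‖w‖ := by
        rw [div_lt_iff₀ (by positivity : (0:ℝ) < (n:ℝ)+1)]
        have e1 : M * ‖w‖ ^ (n+1) = (M * ‖w‖ ^ n) * ‖w‖ := by ring
        rw [e1]
        have h5 : M * ‖w‖ ^ n < ((n:ℝ)+1) * Real.cos α := by
          calc M * ‖w‖ ^ n < M := by
                nlinarith
            _ ≤ ((n:ℝ)+1) * Real.cos α := by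
                rw [hM_def]
                nlinarith [Nat.cast_nonneg (α := ℝ) n]
        nlinarith
      have h6 : ‖h w / w‖ = ‖h w‖ / ‖w‖ := by
        rw [norm_div]
      rw [h6, div_lt_iff₀ hwpos]
      calc ‖h w‖ ≤ M * ‖w‖ ^ (n+1) / (n+1) := h2
        _ < Real.cos α * ‖w‖ := h4
  -- final geometry
  intro z hz
  have hw := hfinal z hz
  rw [one_div] at hw
  have h7 := aux_arg hαabs hw
  rwa [Complex.abs_arg_inv] at h7
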